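/- Fix D ≥ 2, c₀ > 0 and B > 0. There exists a constant C > 0, depending only on D, c₀ and B, such that for all D×D real lower triangular matrices L₀, L₁ with |L_i j j| ≥ c₀ for all j and |(L_i) j k| ≤ B for all j, k (i = 0, 1), setting Σ_i = L_i L_iᵀ and letting p_i(y) = (2π)^{-D/2} (det Σ_i)^{-1/2} exp(−½ yᵀ Σ_i⁻¹ y) be the centered Gaussian densities, one has ∫_{ℝ^D} p₀(y) log(p₀(y)/p₁(y)) dy ≤ C · max_{j,k} |(L₀) j k − (L₁) j k|. -/

import Mathlib

open Matrix MeasureTheory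

/-- The multivariate normal density on `ℝ^D` with mean `μ` and covariance `S`. -/
noncomputable def gaussianDensity (D : ℕ) (μ : Fin D → ℝ)
    (S : Matrix (Fin D) (Fin D) ℝ) (y : Fin D → ℝ) : ℝ :=
  (2 * Real.pi) ^ (-(D : ℝ) / 2) * S.det ^ (-(1 : ℝ) / 2) *
    Real.exp (-(1 / 2) * ((y - μ) ⬝ᵥ (S⁻¹ *ᵥ (y - μ))))

open Real Filter


noncomputable def stdG (t : ℝ) : ℝ := (Real.sqrt (2 * Real.pi))⁻¹ * Real.exp (-t ^ 2 / 2)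

lemma integrable_exp_half : Integrable (fun t : ℝ => Real.exp (-t ^ 2 / 2)) := by
  have := integrable_exp_neg_mul_sq (b := (1/2 : ℝ)) (by norm_num)
  convert this using 2 with t
  ring_nf

lemma integrable_mul_exp_half : Integrable (fun t : ℝ => t * Real.exp (-t ^ 2 / 2)) := by
  have := integrable_mul_exp_neg_mul_sq (b := (1/2 : ℝ)) (by norm_num)
  convert this using 2 with t
  ring_nf

lemma integrable_sq_mul_exp_half : Integrable (fun t : ℝ => t ^ 2 * Real.exp (-t ^ 2 / 2)) := by
  have h := integrable_rpow_mul_exp_neg_mul_sq (b := (1/2 : ℝ)) (by norm_num) (s := 2) (by norm_num)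
  refine h.congr (Filter.Eventually.of_forall fun t => ?_)
  simp only []
  rw [show ((2:ℝ)) = ((2:ℕ):ℝ) by norm_num, Real.rpow_natCast]
  push_cast
  ring_nf

lemma integral_exp_half : ∫ t : ℝ, Real.exp (-t ^ 2 / 2) = Real.sqrt (2 * Real.pi) := by
  have := integral_gaussian (1/2 : ℝ)
  rw [show (Real.pi / (1/2)) = 2 * Real.pi by ring] at this
  rw [← this]
  congr 1 with t
  ring_nf

lemma integrable_stdG : Integrable stdG := integrable_exp_half.const_mul _

lemma integrable_stdG_mul : Integrable (fun t => stdG t * t) := by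
  have := integrable_mul_exp_half.const_mul (Real.sqrt (2 * Real.pi))⁻¹
  refine this.congr (Filter.Eventually.of_forall fun t => ?_)
  simp [stdG]; ring

lemma integrable_stdG_sq : Integrable (fun t => stdG t * (t * t)) := by
  have := integrable_sq_mul_exp_half.const_mul (Real.sqrt (2 * Real.pi))⁻¹
  refine this.congr (Filter.Eventually.of_forall fun t => ?_)
  simp [stdG]; ring

lemma int_stdG : ∫ t, stdG t = 1 := by
  unfold stdG
  rw [MeasureTheory.integral_const_mul, integral_exp_half]
  rw [inv_mul_cancel₀]
  positivity

lemma int_stdG_mul : ∫ t, stdG t * t = 0 := by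
  have h : (∫ t, stdG t * t) = ∫ t, stdG (-t) * (-t) := by
    exact (integral_neg_eq_self (fun s : ℝ => stdG s * s) volume).symm
  have h2 : (∫ t, stdG (-t) * (-t)) = - ∫ t, stdG t * t := by
    rw [← integral_neg]
    congr 1 with t
    simp [stdG]
  linarith [h, h2]

lemma tendsto_mul_exp_half_atTop : Tendsto (fun t : ℝ => t * Real.exp (-t ^ 2 / 2)) atTop (nhds 0) := by
  have h := rpow_mul_exp_neg_mul_sq_isLittleO_exp_neg (b := (1/2:ℝ)) (by norm_num) 1
  have h0 : Tendsto (fun x : ℝ => Real.exp (-(1/2) * x)) atTop (nhds 0) := by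
    apply Real.tendsto_exp_atBot.comp
    exact Filter.Tendsto.const_mul_atTop_of_neg (by norm_num) tendsto_id
  have := h.tendsto_zero_of_tendsto h0
  refine this.congr' ?_
  filter_upwards [eventually_ge_atTop (0:ℝ)] with t _
  rw [Real.rpow_one]
  ring_nf

lemma tendsto_mul_exp_half_atBot : Tendsto (fun t : ℝ => t * Real.exp (-t ^ 2 / 2)) atBot (nhds 0) := by
  have h := tendsto_mul_exp_half_atTop
  have : Tendsto (fun t : ℝ => (-t) * Real.exp (-(-t) ^ 2 / 2)) atBot (nhds 0) :=
    h.comp tendsto_neg_atBot_atTop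
  have h2 := this.neg
  rw [neg_zero] at h2
  refine h2.congr fun t => ?_
  simp

lemma hasDerivAt_negmul (t : ℝ) :
    HasDerivAt (fun t : ℝ => -t * Real.exp (-t ^ 2 / 2))
      ((t ^ 2 - 1) * Real.exp (-t ^ 2 / 2)) t := by
  have he : HasDerivAt (fun t : ℝ => Real.exp (-t ^ 2 / 2)) ((-t) * Real.exp (-t ^ 2 / 2)) t := by
    have hi : HasDerivAt (fun t : ℝ => -t ^ 2 / 2) (-t) t := by
      have := ((hasDerivAt_pow 2 t).neg).div_const 2
      simpa using this.congr_deriv (by push_cast; ring)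
    simpa [mul_comm] using hi.exp
  have : HasDerivAt (fun t : ℝ => -t * Real.exp (-t ^ 2 / 2))
      (-1 * Real.exp (-t ^ 2 / 2) + -t * (-t * Real.exp (-t ^ 2 / 2))) t :=
    ((hasDerivAt_id' t).neg).mul he
  convert this using 1
  ring

lemma int_sq_exp_half : ∫ t : ℝ, t ^ 2 * Real.exp (-t ^ 2 / 2) = Real.sqrt (2 * Real.pi) := by
  have hint : Integrable (fun t : ℝ => (t ^ 2 - 1) * Real.exp (-t ^ 2 / 2)) := by
    have := integrable_sq_mul_exp_half.sub integrable_exp_half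
    refine this.congr (Filter.Eventually.of_forall fun t => ?_)
    simp only [Pi.sub_apply]; ring
  have hIoi : ∫ t in Set.Ioi (0:ℝ), (t ^ 2 - 1) * Real.exp (-t ^ 2 / 2) = 0 := by
    have := integral_Ioi_of_hasDerivAt_of_tendsto' (m := 0) (a := (0:ℝ))
      (f := fun t : ℝ => -t * Real.exp (-t ^ 2 / 2))
      (fun x _ => hasDerivAt_negmul x) (hint.integrableOn)
      (by simpa using tendsto_mul_exp_half_atTop.neg)
    simpa using this
  have hIic : ∫ t in Set.Iic (0:ℝ), (t ^ 2 - 1) * Real.exp (-t ^ 2 / 2) = 0 := by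
    have := integral_Iic_of_hasDerivAt_of_tendsto' (m := 0) (a := (0:ℝ))
      (f := fun t : ℝ => -t * Real.exp (-t ^ 2 / 2))
      (fun x _ => hasDerivAt_negmul x) (hint.integrableOn)
      (by simpa using tendsto_mul_exp_half_atBot.neg)
    simpa using this
  have hsplit : ∫ t : ℝ, (t ^ 2 - 1) * Real.exp (-t ^ 2 / 2) = 0 := by
    rw [← intervalIntegral.integral_Iic_add_Ioi (b := (0:ℝ)) hint.integrableOn hint.integrableOn, hIic, hIoi]
    ring
  have : (∫ t : ℝ, t ^ 2 * Real.exp (-t ^ 2 / 2)) - ∫ t : ℝ, Real.exp (-t ^ 2 / 2) = 0 := by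
    rw [← integral_sub integrable_sq_mul_exp_half integrable_exp_half, ← hsplit]
    congr 1 with t; ring
  rw [integral_exp_half] at this
  linarith

lemma int_stdG_sq : ∫ t, stdG t * (t * t) = 1 := by
  unfold stdG
  have : (fun t : ℝ => (Real.sqrt (2 * Real.pi))⁻¹ * Real.exp (-t ^ 2 / 2) * (t * t))
      = fun t : ℝ => (Real.sqrt (2 * Real.pi))⁻¹ * (t ^ 2 * Real.exp (-t ^ 2 / 2)) := by
    funext t; ring
  rw [this, MeasureTheory.integral_const_mul, int_sq_exp_half, inv_mul_cancel₀]
  positivity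

noncomputable def phiD (D : ℕ) (x : Fin D → ℝ) : ℝ := ∏ i, stdG (x i)

lemma integrable_phiD (D : ℕ) : Integrable (phiD D) :=
  Integrable.fintype_prod (fun _ => integrable_stdG)

lemma int_phiD (D : ℕ) : ∫ x : Fin D → ℝ, phiD D x = 1 := by
  unfold phiD
  rw [integral_fintype_prod_volume_eq_prod (f := fun _ : Fin D => stdG)]
  simp [int_stdG]

section moments
variable {D : ℕ} (j k : Fin D)

private noncomputable def mfun (j k : Fin D) (i : Fin D) (t : ℝ) : ℝ :=
  stdG t * ((if j = i then t else 1) * (if k = i then t else 1))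

lemma mfun_prod (x : Fin D → ℝ) : (∏ i, mfun j k i (x i)) = phiD D x * (x j * x k) := by
  unfold mfun phiD
  rw [Finset.prod_mul_distrib, Finset.prod_mul_distrib]
  congr 1
  congr 1
  · simpa using Finset.prod_ite_eq Finset.univ j (fun i => x i)
  · simpa using Finset.prod_ite_eq Finset.univ k (fun i => x i)

lemma integrable_mfun (i : Fin D) : Integrable (mfun j k i) := by
  unfold mfun
  by_cases hj : j = i <;> by_cases hk : k = i <;> simp only [hj, hk, if_pos, if_neg, ite_true,
    ite_false]
  · simpa using integrable_stdG_sq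
  · simp only [hk, if_neg, mul_one]
    simpa using integrable_stdG_mul
  · simp only [if_neg hj, one_mul]
    simpa using integrable_stdG_mul
  · simp only [if_neg hj, if_neg hk, mul_one]
    simpa using integrable_stdG

lemma integrable_phiD_mul : Integrable (fun x : Fin D → ℝ => phiD D x * (x j * x k)) := by
  have := Integrable.fintype_prod (f := mfun j k) (fun i => integrable_mfun j k i)
  exact this.congr (Filter.Eventually.of_forall fun x => (mfun_prod j k x))

lemma int_phiD_mul :
    ∫ x : Fin D → ℝ, phiD D x * (x j * x k) = if j = k then 1 else 0 := by
  have h : ∫ x : Fin D → ℝ, phiD D x * (x j * x k) = ∏ i, ∫ t, mfun j k i t := by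
    rw [← integral_fintype_prod_eq_prod (f := mfun j k)]
    congr 1 with x
    exact (mfun_prod j k x).symm
  rw [h]
  by_cases hjk : j = k
  · subst hjk
    rw [if_pos rfl]
    apply Finset.prod_eq_one
    intro i _
    unfold mfun
    by_cases hj : j = i
    · subst hj
      simpa using int_stdG_sq
    · simp only [if_neg hj, mul_one]
      simpa using int_stdG
  · rw [if_neg hjk]
    apply Finset.prod_eq_zero (Finset.mem_univ j)
    unfold mfun
    have : k ≠ j := fun h => hjk h.symm
    simp only [if_pos rfl, if_neg this, mul_one]
    simpa using int_stdG_mul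

end moments

lemma int_phiD_quad {D : ℕ} (M : Matrix (Fin D) (Fin D) ℝ) :
    ∫ x : Fin D → ℝ, phiD D x * (x ⬝ᵥ M *ᵥ x) = Matrix.trace M := by
  have hexp : ∀ x : Fin D → ℝ, phiD D x * (x ⬝ᵥ M *ᵥ x)
      = ∑ j, ∑ i, M j i * (phiD D x * (x j * x i)) := by
    intro x
    rw [dotProduct, Finset.mul_sum]
    congr 1 with j
    rw [Matrix.mulVec, dotProduct, Finset.mul_sum, Finset.mul_sum]
    congr 1 with i
    ring
  calc ∫ x : Fin D → ℝ, phiD D x * (x ⬝ᵥ M *ᵥ x)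
      = ∫ x : Fin D → ℝ, ∑ j, ∑ i, M j i * (phiD D x * (x j * x i)) := by
        congr 1 with x; exact hexp x
    _ = ∑ j, ∑ i, M j i * ∫ x : Fin D → ℝ, phiD D x * (x j * x i) := by
        rw [integral_finset_sum _ (fun j _ => (integrable_finset_sum _
          (fun i _ => (integrable_phiD_mul j i).const_mul (M j i)) :
            Integrable (fun x : Fin D → ℝ => ∑ i, M j i * (phiD D x * (x j * x i)))))]
        congr 1 with j
        rw [integral_finset_sum _ (fun i _ => (integrable_phiD_mul j i).const_mul _)]
        congr 1 with i
        rw [MeasureTheory.integral_const_mul]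
    _ = Matrix.trace M := by
        rw [Matrix.trace]
        congr 1 with j
        rw [Finset.sum_eq_single j (fun i _ hij => by
          rw [int_phiD_mul, if_neg (fun h => hij h.symm), mul_zero])
          (fun h => absurd (Finset.mem_univ j) h)]
        rw [int_phiD_mul, if_pos rfl, mul_one, Matrix.diag]

lemma integrable_phiD_quad {D : ℕ} (M : Matrix (Fin D) (Fin D) ℝ) :
    Integrable (fun x : Fin D → ℝ => phiD D x * (x ⬝ᵥ M *ᵥ x)) := by
  have : (fun x : Fin D → ℝ => phiD D x * (x ⬝ᵥ M *ᵥ x))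
      = fun x => ∑ j, ∑ i, M j i * (phiD D x * (x j * x i)) := by
    funext x
    rw [dotProduct, Finset.mul_sum]
    congr 1 with j
    rw [Matrix.mulVec, dotProduct, Finset.mul_sum, Finset.mul_sum]
    congr 1 with i
    ring
  rw [this]
  exact integrable_finset_sum _ (fun j _ => integrable_finset_sum _
    (fun i _ => (integrable_phiD_mul j i).const_mul _))

section matrixEst
variable {D : ℕ}

lemma abs_det_le (M : Matrix (Fin D) (Fin D) ℝ) {b : ℝ} (hb : ∀ i j, |M i j| ≤ b) :
    |M.det| ≤ (D.factorial : ℝ) * b ^ D := by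
  have := Matrix.det_le (A := M) (abv := AbsoluteValue.abs) (x := b) hb
  simpa [Fintype.card_fin, nsmul_eq_mul] using this

lemma det_lowerTri (L : Matrix (Fin D) (Fin D) ℝ) (hL : ∀ i j : Fin D, i < j → L i j = 0) :
    L.det = ∏ j, L j j := by
  apply Matrix.det_of_lowerTriangular
  intro i j hij
  exact hL i j hij

lemma abs_det_lowerTri_ge (L : Matrix (Fin D) (Fin D) ℝ) (hL : ∀ i j : Fin D, i < j → L i j = 0)
    {c₀ : ℝ} (hc₀ : 0 < c₀) (hd : ∀ j, c₀ ≤ |L j j|) : c₀ ^ D ≤ |L.det| := by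
  rw [det_lowerTri L hL, Finset.abs_prod]
  calc c₀ ^ D = ∏ _j : Fin D, c₀ := by simp
    _ ≤ ∏ j, |L j j| := Finset.prod_le_prod (fun _ _ => le_of_lt hc₀) (fun j _ => hd j)

lemma inv_entry_bound (L : Matrix (Fin D) (Fin D) ℝ) (hL : ∀ i j : Fin D, i < j → L i j = 0)
    {c₀ B : ℝ} (hc₀ : 0 < c₀) (hd : ∀ j, c₀ ≤ |L j j|) (hB : ∀ i j, |L i j| ≤ B) :
    ∀ i j, |L⁻¹ i j| ≤ (D.factorial : ℝ) * (max B 1) ^ D / c₀ ^ D := by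
  intro i j
  have hdet : c₀ ^ D ≤ |L.det| := abs_det_lowerTri_ge L hL hc₀ hd
  have hdetne : L.det ≠ 0 := by
    intro h; rw [h, abs_zero] at hdet
    exact absurd hdet (not_le.mpr (by positivity))
  have hadj : |L.adjugate i j| ≤ (D.factorial : ℝ) * (max B 1) ^ D := by
    rw [Matrix.adjugate_apply]
    apply abs_det_le
    intro a b
    rw [Matrix.updateRow_apply]
    by_cases hab : a = j
    · simp only [if_pos hab]
      by_cases hib : i = b
      · subst hib; simp
      · rw [Pi.single_eq_of_ne (fun h => hib h.symm), abs_zero]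
        exact le_trans zero_le_one (le_max_right _ _)
    · simp only [if_neg hab]
      exact le_trans (hB a b) (le_max_left _ _)
  have hinv : L⁻¹ i j = (L.det)⁻¹ * L.adjugate i j := by
    rw [Matrix.inv_def, Ring.inverse_eq_inv]
    simp [Matrix.smul_apply, smul_eq_mul]
  rw [hinv, abs_mul, abs_inv, div_eq_mul_inv]
  have h1 : |L.det|⁻¹ ≤ (c₀ ^ D)⁻¹ := by
    apply inv_anti₀ (by positivity) hdet
  calc |L.det|⁻¹ * |L.adjugate i j| ≤ (c₀ ^ D)⁻¹ * ((D.factorial : ℝ) * (max B 1) ^ D) :=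
        mul_le_mul h1 hadj (abs_nonneg _) (by positivity)
    _ = (D.factorial : ℝ) * (max B 1) ^ D * (c₀ ^ D)⁻¹ := by ring

end matrixEst


section partA
variable {D : ℕ}

lemma integral_comp_mulVec (M : Matrix (Fin D) (Fin D) ℝ) (hM : M.det ≠ 0)
    (f : (Fin D → ℝ) → ℝ) (hf : AEStronglyMeasurable f (volume : Measure (Fin D → ℝ))) :
    ∫ y, f y = |M.det| * ∫ x, f (M.mulVec x) := by
  have hmap := Real.map_matrix_volume_pi_eq_smul_volume_pi hM
  have hT : Measurable (Matrix.toLin' M) := by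
    apply Continuous.measurable
    apply LinearMap.continuous_on_pi
  have hfm : AEStronglyMeasurable f (Measure.map (Matrix.toLin' M) volume) := by
    rw [hmap]
    exact hf.mono_ac (Measure.absolutelyContinuous_of_le_smul (c := ENNReal.ofReal |M.det⁻¹|) le_rfl)
  have h1 : ∫ x, f (M.mulVec x) = ∫ y, f y ∂(Measure.map (Matrix.toLin' M) volume) := by
    rw [integral_map hT.aemeasurable hfm]
    simp [Matrix.toLin'_apply]
  rw [h1, hmap, integral_smul_measure]
  have habs : (0:ℝ) < |M.det| := abs_pos.mpr hM
  rw [abs_inv] at *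
  rw [ENNReal.toReal_ofReal (by positivity), smul_eq_mul, ← mul_assoc,
    mul_inv_cancel₀ (ne_of_gt habs), one_mul]

lemma det_LLT_pos (L : Matrix (Fin D) (Fin D) ℝ) (h : L.det ≠ 0) : 0 < (L * Lᵀ).det := by
  rw [Matrix.det_mul, Matrix.det_transpose]
  exact mul_self_pos.mpr h

lemma gd_pos (S : Matrix (Fin D) (Fin D) ℝ) (h : 0 < S.det) (y : Fin D → ℝ) :
    0 < gaussianDensity D 0 S y := by
  unfold gaussianDensity
  have h2π : (0:ℝ) < 2 * Real.pi := by positivity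
  have := Real.rpow_pos_of_pos h2π (-(D:ℝ)/2)
  have := Real.rpow_pos_of_pos h (-(1:ℝ)/2)
  positivity

lemma measurable_quad (S : Matrix (Fin D) (Fin D) ℝ) :
    Measurable (fun y : Fin D → ℝ => y ⬝ᵥ (S *ᵥ y)) := by
  simp only [dotProduct, Matrix.mulVec]
  exact Finset.measurable_sum _ fun i _ => (measurable_pi_apply i).mul
    (Finset.measurable_sum _ fun j _ => measurable_const.mul (measurable_pi_apply j))

lemma measurable_gd (S : Matrix (Fin D) (Fin D) ℝ) :
    Measurable (gaussianDensity D 0 S) := by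
  unfold gaussianDensity
  simp only [sub_zero]
  exact measurable_const.mul (Real.measurable_exp.comp ((measurable_quad S⁻¹).const_mul _))

lemma log_gd_ratio (S₀ S₁ : Matrix (Fin D) (Fin D) ℝ) (h₀ : 0 < S₀.det) (h₁ : 0 < S₁.det)
    (y : Fin D → ℝ) :
    Real.log (gaussianDensity D 0 S₀ y / gaussianDensity D 0 S₁ y)
      = (1/2) * (Real.log S₁.det - Real.log S₀.det)
        + (1/2) * ((y ⬝ᵥ (S₁⁻¹ *ᵥ y)) - (y ⬝ᵥ (S₀⁻¹ *ᵥ y))) := by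
  have h2π : (0:ℝ) < 2 * Real.pi := by positivity
  have hc : (0:ℝ) < (2 * Real.pi) ^ (-(D:ℝ)/2) := Real.rpow_pos_of_pos h2π _
  have hd₀ : (0:ℝ) < S₀.det ^ (-(1:ℝ)/2) := Real.rpow_pos_of_pos h₀ _
  have hd₁ : (0:ℝ) < S₁.det ^ (-(1:ℝ)/2) := Real.rpow_pos_of_pos h₁ _
  rw [Real.log_div (ne_of_gt (gd_pos S₀ h₀ y)) (ne_of_gt (gd_pos S₁ h₁ y))]
  unfold gaussianDensity
  simp only [sub_zero]
  rw [Real.log_mul (by positivity) (Real.exp_ne_zero _),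
    Real.log_mul (by positivity) (Real.exp_ne_zero _),
    Real.log_mul (ne_of_gt hc) (ne_of_gt hd₀), Real.log_mul (ne_of_gt hc) (ne_of_gt hd₁),
    Real.log_exp, Real.log_exp, Real.log_rpow h₀, Real.log_rpow h₁]
  ring

lemma dot_mulVec_comp (S L : Matrix (Fin D) (Fin D) ℝ) (x : Fin D → ℝ) :
    (L *ᵥ x) ⬝ᵥ (S *ᵥ (L *ᵥ x)) = x ⬝ᵥ ((Lᵀ * S * L) *ᵥ x) := by
  rw [Matrix.mulVec_mulVec, Matrix.dotProduct_mulVec, ← Matrix.vecMul_transpose,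
    Matrix.vecMul_vecMul, Matrix.dotProduct_mulVec, mul_assoc]

lemma Lt_inv_L (L : Matrix (Fin D) (Fin D) ℝ) (h : IsUnit L.det) :
    Lᵀ * (L * Lᵀ)⁻¹ * L = 1 := by
  rw [Matrix.mul_inv_rev]
  have h' : IsUnit Lᵀ.det := by rwa [Matrix.det_transpose]
  calc Lᵀ * (Lᵀ⁻¹ * L⁻¹) * L = (Lᵀ * Lᵀ⁻¹) * (L⁻¹ * L) := by noncomm_ring
    _ = 1 := by rw [Matrix.mul_nonsing_inv _ h', Matrix.nonsing_inv_mul _ h, one_mul]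

lemma phiD_eq (x : Fin D → ℝ) :
    phiD D x = (2 * Real.pi) ^ (-(D:ℝ)/2) * Real.exp (-(1/2) * (x ⬝ᵥ x)) := by
  have h2π : (0:ℝ) < 2 * Real.pi := by positivity
  unfold phiD stdG
  rw [Finset.prod_mul_distrib, Finset.prod_const, ← Real.exp_sum]
  congr 1
  · rw [Real.sqrt_eq_rpow, ← Real.rpow_neg_one ((2*Real.pi) ^ ((1:ℝ)/2)),
      ← Real.rpow_mul (le_of_lt h2π), Finset.card_univ, Fintype.card_fin,
      ← Real.rpow_natCast ((2*Real.pi) ^ ((1:ℝ)/2 * -1)) D,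
      ← Real.rpow_mul (le_of_lt h2π)]
    congr 1
    ring
  · rw [dotProduct, Finset.mul_sum]
    congr 1
    apply Finset.sum_congr rfl
    intro i _
    ring

lemma det_rpow_LLT (L : Matrix (Fin D) (Fin D) ℝ) (h : L.det ≠ 0) :
    ((L * Lᵀ).det : ℝ) ^ (-(1:ℝ)/2) = |L.det|⁻¹ := by
  rw [Matrix.det_mul, Matrix.det_transpose, ← abs_mul_abs_self L.det,
    ← sq, ← Real.rpow_natCast |L.det| 2, ← Real.rpow_mul (abs_nonneg _)]
  norm_num
  exact Real.rpow_neg_one |L.det|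

lemma kl_closed_form (L₀ L₁ : Matrix (Fin D) (Fin D) ℝ) (h₀ : L₀.det ≠ 0) (h₁ : L₁.det ≠ 0) :
    (∫ y : Fin D → ℝ, gaussianDensity D 0 (L₀ * L₀ᵀ) y *
        Real.log (gaussianDensity D 0 (L₀ * L₀ᵀ) y / gaussianDensity D 0 (L₁ * L₁ᵀ) y))
      = (1/2) * (Real.log (L₁ * L₁ᵀ).det - Real.log (L₀ * L₀ᵀ).det)
        + (1/2) * (Matrix.trace (L₀ᵀ * (L₁ * L₁ᵀ)⁻¹ * L₀) - D) := by
  have hs₀ : 0 < (L₀ * L₀ᵀ).det := det_LLT_pos L₀ h₀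
  have hs₁ : 0 < (L₁ * L₁ᵀ).det := det_LLT_pos L₁ h₁
  set c : ℝ := (1/2) * (Real.log (L₁ * L₁ᵀ).det - Real.log (L₀ * L₀ᵀ).det) with hc
  set M : Matrix (Fin D) (Fin D) ℝ := L₀ᵀ * (L₁ * L₁ᵀ)⁻¹ * L₀ with hM
  set f : (Fin D → ℝ) → ℝ := fun y => gaussianDensity D 0 (L₀ * L₀ᵀ) y *
      Real.log (gaussianDensity D 0 (L₀ * L₀ᵀ) y / gaussianDensity D 0 (L₁ * L₁ᵀ) y) with hf
  have hmeas : Measurable f :=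
    (measurable_gd _).mul (Real.measurable_log.comp
      ((measurable_gd _).div (measurable_gd _)))
  have step1 : (∫ y, f y) = |L₀.det| * ∫ x, f (L₀ *ᵥ x) :=
    integral_comp_mulVec L₀ h₀ f hmeas.aestronglyMeasurable
  have hptwise : ∀ x : Fin D → ℝ, |L₀.det| * f (L₀ *ᵥ x)
      = phiD D x * (c + (1/2) * ((x ⬝ᵥ (M *ᵥ x)) - (x ⬝ᵥ ((1 : Matrix (Fin D) (Fin D) ℝ) *ᵥ x)))) := by
    intro x
    have hq₀ : (L₀ *ᵥ x) ⬝ᵥ ((L₀ * L₀ᵀ)⁻¹ *ᵥ (L₀ *ᵥ x))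
        = x ⬝ᵥ ((1 : Matrix (Fin D) (Fin D) ℝ) *ᵥ x) := by
      rw [dot_mulVec_comp, Lt_inv_L L₀ (isUnit_iff_ne_zero.mpr h₀)]
    have hq₁ : (L₀ *ᵥ x) ⬝ᵥ ((L₁ * L₁ᵀ)⁻¹ *ᵥ (L₀ *ᵥ x)) = x ⬝ᵥ (M *ᵥ x) := by
      rw [dot_mulVec_comp, hM]
    have hlog : Real.log (gaussianDensity D 0 (L₀ * L₀ᵀ) (L₀ *ᵥ x)
          / gaussianDensity D 0 (L₁ * L₁ᵀ) (L₀ *ᵥ x))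
        = c + (1/2) * ((x ⬝ᵥ (M *ᵥ x)) - (x ⬝ᵥ ((1 : Matrix (Fin D) (Fin D) ℝ) *ᵥ x))) := by
      rw [log_gd_ratio _ _ hs₀ hs₁, hq₀, hq₁]
    have hgd : gaussianDensity D 0 (L₀ * L₀ᵀ) (L₀ *ᵥ x) = |L₀.det|⁻¹ * phiD D x := by
      unfold gaussianDensity
      rw [sub_zero, hq₀, Matrix.one_mulVec, det_rpow_LLT L₀ h₀, phiD_eq]
      ring
    rw [hf]
    simp only []
    rw [hlog, hgd]
    have habs : |L₀.det| ≠ 0 := fun h => h₀ (abs_eq_zero.mp h)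
    field_simp
  have step2 : |L₀.det| * ∫ x, f (L₀ *ᵥ x)
      = ∫ x, phiD D x * (c + (1/2) * ((x ⬝ᵥ (M *ᵥ x)) - (x ⬝ᵥ ((1 : Matrix (Fin D) (Fin D) ℝ) *ᵥ x)))) := by
    rw [← MeasureTheory.integral_const_mul]
    congr 1 with x
    exact hptwise x
  have hexpand : (fun x : Fin D → ℝ => phiD D x * (c + (1/2) * ((x ⬝ᵥ (M *ᵥ x)) - (x ⬝ᵥ ((1 : Matrix (Fin D) (Fin D) ℝ) *ᵥ x)))))
      = fun x => (c * phiD D x + (1/2) * (phiD D x * (x ⬝ᵥ (M *ᵥ x))))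
          - (1/2) * (phiD D x * (x ⬝ᵥ ((1 : Matrix (Fin D) (Fin D) ℝ) *ᵥ x))) := by
    funext x
    ring
  have hint1 : Integrable (fun x : Fin D → ℝ => c * phiD D x) := (integrable_phiD D).const_mul c
  have hint2 : Integrable (fun x : Fin D → ℝ => (1/2) * (phiD D x * (x ⬝ᵥ (M *ᵥ x)))) :=
    (integrable_phiD_quad M).const_mul _
  have hint3 : Integrable (fun x : Fin D → ℝ => (1/2) * (phiD D x * (x ⬝ᵥ ((1 : Matrix (Fin D) (Fin D) ℝ) *ᵥ x)))) :=
    (integrable_phiD_quad 1).const_mul _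
  have step3 : (∫ x, phiD D x * (c + (1/2) * ((x ⬝ᵥ (M *ᵥ x)) - (x ⬝ᵥ ((1 : Matrix (Fin D) (Fin D) ℝ) *ᵥ x)))))
      = c + (1/2) * (Matrix.trace M - D) := by
    have hint12 : Integrable (fun x : Fin D → ℝ =>
        c * phiD D x + 1 / 2 * (phiD D x * (x ⬝ᵥ (M *ᵥ x)))) := hint1.add hint2
    rw [hexpand, MeasureTheory.integral_sub hint12 hint3]
    rw [MeasureTheory.integral_add hint1 hint2,
      MeasureTheory.integral_const_mul, MeasureTheory.integral_const_mul,
      MeasureTheory.integral_const_mul, int_phiD, int_phiD_quad, int_phiD_quad,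
      Matrix.trace_one]
    simp
    ring
  rw [step1, step2, step3]

lemma log_abs_sub_log_abs_le {a b c₀ : ℝ} (hc₀ : 0 < c₀) (ha : c₀ ≤ |a|) (hb : c₀ ≤ |b|) :
    Real.log |b| - Real.log |a| ≤ |a - b| / c₀ := by
  have ha0 : (0:ℝ) < |a| := lt_of_lt_of_le hc₀ ha
  have hb0 : (0:ℝ) < |b| := lt_of_lt_of_le hc₀ hb
  have h1 : Real.log |b| - Real.log |a| = Real.log (|b| / |a|) := by
    rw [Real.log_div (ne_of_gt hb0) (ne_of_gt ha0)]
  rw [h1]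
  calc Real.log (|b| / |a|) ≤ |b| / |a| - 1 := Real.log_le_sub_one_of_pos (by positivity)
    _ = (|b| - |a|) / |a| := by field_simp
    _ ≤ |b - a| / |a| := by gcongr; exact abs_sub_abs_le_abs_sub b a
    _ ≤ |b - a| / c₀ := by gcongr
    _ = |a - b| / c₀ := by rw [abs_sub_comm]

lemma log_det_LLT (L : Matrix (Fin D) (Fin D) ℝ) (hTri : ∀ i j : Fin D, i < j → L i j = 0)
    (hd : ∀ j, L j j ≠ 0) :
    Real.log (L * Lᵀ).det = 2 * ∑ j, Real.log |L j j| := by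
  have hdet : L.det = ∏ j, L j j := det_lowerTri L hTri
  have habs : |L.det| = ∏ j, |L j j| := by rw [hdet, Finset.abs_prod]
  have hdetne : L.det ≠ 0 := by
    rw [hdet]; exact Finset.prod_ne_zero_iff.mpr (fun j _ => hd j)
  rw [Matrix.det_mul, Matrix.det_transpose, ← abs_mul_abs_self L.det,
    Real.log_mul (by simpa using hdetne) (by simpa using hdetne), habs,
    Real.log_prod (fun j _ => by simpa using hd j)]
  ring

end partA

/-- Kullback–Leibler bound `K(p₀,p₁) ≤ C ‖L₀ − L₁‖_∞` of Lemma B.1. -/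
theorem kl_le_of_cholesky_close
    (D : ℕ) (hD : 2 ≤ D) (c₀ B : ℝ) (hc₀ : 0 < c₀) (hB : 0 < B) :
    ∃ C > 0, ∀ L₀ L₁ : Matrix (Fin D) (Fin D) ℝ,
      (∀ i j : Fin D, i < j → L₀ i j = 0) → (∀ i j : Fin D, i < j → L₁ i j = 0) →
      (∀ j : Fin D, c₀ ≤ |L₀ j j|) → (∀ j : Fin D, c₀ ≤ |L₁ j j|) →
      (∀ j k : Fin D, |L₀ j k| ≤ B) → (∀ j k : Fin D, |L₁ j k| ≤ B) →
      (∫ y : Fin D → ℝ,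
          gaussianDensity D 0 (L₀ * L₀ᵀ) y *
            Real.log (gaussianDensity D 0 (L₀ * L₀ᵀ) y
              / gaussianDensity D 0 (L₁ * L₁ᵀ) y))
        ≤ C * ⨆ j : Fin D, ⨆ k : Fin D, |L₀ j k - L₁ j k| := by
  classical
  have hfac : (0:ℝ) < (D.factorial : ℝ) := by exact_mod_cast D.factorial_pos
  set CI : ℝ := (D.factorial : ℝ) * (max B 1) ^ D / c₀ ^ D with hCI
  have hCIpos : 0 < CI := by
    have h1 : (0:ℝ) < max B 1 := lt_of_lt_of_le one_pos (le_max_right _ _)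
    positivity
  have hDpos : (0:ℝ) < D := by
    have : 0 < D := by omega
    exact_mod_cast this
  refine ⟨(D:ℝ)/c₀ + (D:ℝ)^2*CI + (D:ℝ)^4*CI^2*B, by positivity, ?_⟩
  intro L₀ L₁ hT₀ hT₁ hd₀ hd₁ hB₀ hB₁
  have hdetne : ∀ L : Matrix (Fin D) (Fin D) ℝ, (∀ i j : Fin D, i < j → L i j = 0) →
      (∀ j, c₀ ≤ |L j j|) → L.det ≠ 0 := by
    intro L hT hd h
    have := abs_det_lowerTri_ge L hT hc₀ hd
    rw [h, abs_zero] at this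
    exact absurd this (not_le.mpr (by positivity))
  have h₀ : L₀.det ≠ 0 := hdetne L₀ hT₀ hd₀
  have h₁ : L₁.det ≠ 0 := hdetne L₁ hT₁ hd₁
  rw [kl_closed_form L₀ L₁ h₀ h₁]
  set ε := ⨆ j : Fin D, ⨆ k : Fin D, |L₀ j k - L₁ j k| with hεdef
  have hne : Nonempty (Fin D) := ⟨⟨0, by omega⟩⟩
  have hεle : ∀ j k : Fin D, |L₀ j k - L₁ j k| ≤ ε := by
    intro j k
    calc |L₀ j k - L₁ j k| ≤ ⨆ k : Fin D, |L₀ j k - L₁ j k| :=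
          le_ciSup (f := fun k : Fin D => |L₀ j k - L₁ j k|)
            (Set.Finite.bddAbove (Set.finite_range _)) k
      _ ≤ ε := by
          rw [hεdef]
          exact le_ciSup (f := fun j : Fin D => ⨆ k : Fin D, |L₀ j k - L₁ j k|)
            (Set.Finite.bddAbove (Set.finite_range _)) j
  have hε0 : 0 ≤ ε := le_trans (abs_nonneg _) (hεle hne.some hne.some)
  have hε2B : ε ≤ 2*B := by
    apply ciSup_le
    intro j
    apply ciSup_le
    intro k
    have : |L₀ j k - L₁ j k| ≤ |L₀ j k| + |L₁ j k| := by
      rw [sub_eq_add_neg]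
      exact le_trans (abs_add_le _ _) (by rw [abs_neg])
    linarith [hB₀ j k, hB₁ j k]
  have hinv : ∀ i j, |L₁⁻¹ i j| ≤ CI := inv_entry_bound L₁ hT₁ hc₀ hd₁ hB₁
  set E := L₁⁻¹ * (L₀ - L₁) with hEdef
  have hE : ∀ i j, |E i j| ≤ (D:ℝ) * (CI * ε) := by
    intro i j
    rw [hEdef, Matrix.mul_apply]
    calc |∑ k, L₁⁻¹ i k * (L₀ - L₁) k j| ≤ ∑ k, |L₁⁻¹ i k * (L₀ - L₁) k j| :=
          Finset.abs_sum_le_sum_abs _ _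
      _ ≤ ∑ _k : Fin D, CI * ε := Finset.sum_le_sum (fun k _ => by
          rw [abs_mul]
          exact mul_le_mul (hinv i k) (by simpa [Matrix.sub_apply] using hεle k j)
            (abs_nonneg _) (le_of_lt hCIpos))
      _ = (D:ℝ) * (CI * ε) := by
          rw [Finset.sum_const, Finset.card_univ, Fintype.card_fin, nsmul_eq_mul]
  have hE2B : ∀ i j, |E i j| ≤ (D:ℝ) * (CI * (2*B)) := by
    intro i j
    refine le_trans (hE i j) ?_
    have : CI * ε ≤ CI * (2*B) := by
      apply mul_le_mul_of_nonneg_left hε2B (le_of_lt hCIpos)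
    nlinarith
  have hA : L₁⁻¹ * L₀ = 1 + E := by
    rw [hEdef, Matrix.mul_sub, Matrix.nonsing_inv_mul L₁ (isUnit_iff_ne_zero.mpr h₁)]
    noncomm_ring
  have hMeq : L₀ᵀ * (L₁ * L₁ᵀ)⁻¹ * L₀ = (1 + E)ᵀ * (1 + E) := by
    rw [← hA, Matrix.mul_inv_rev, Matrix.transpose_mul, Matrix.transpose_nonsing_inv]
    noncomm_ring
  have htr : Matrix.trace ((1+E)ᵀ * (1+E))
      = (D:ℝ) + 2 * Matrix.trace E + Matrix.trace (Eᵀ * E) := by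
    have hexp : (1+E)ᵀ * (1+E) = 1 + (E + (Eᵀ + Eᵀ*E)) := by
      rw [Matrix.transpose_add, Matrix.transpose_one]
      noncomm_ring
    rw [hexp, Matrix.trace_add, Matrix.trace_add, Matrix.trace_add, Matrix.trace_one,
      Matrix.trace_transpose]
    simp [Fintype.card_fin]
    ring
  have htrE : Matrix.trace E ≤ (D:ℝ) * ((D:ℝ) * (CI * ε)) := by
    rw [Matrix.trace]
    calc ∑ j, E.diag j ≤ ∑ _j : Fin D, (D:ℝ) * (CI * ε) :=
          Finset.sum_le_sum (fun j _ => le_trans (le_abs_self _) (hE j j))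
      _ = (D:ℝ) * ((D:ℝ) * (CI * ε)) := by
          rw [Finset.sum_const, Finset.card_univ, Fintype.card_fin, nsmul_eq_mul]
  have htrEE : Matrix.trace (Eᵀ * E)
      ≤ (D:ℝ)^2 * (((D:ℝ) * (CI * ε)) * ((D:ℝ) * (CI * (2*B)))) := by
    rw [Matrix.trace]
    have hterm : ∀ j : Fin D, (Eᵀ * E).diag j ≤ (D:ℝ) * (((D:ℝ) * (CI * ε)) * ((D:ℝ) * (CI * (2*B)))) := by
      intro j
      rw [Matrix.diag, Matrix.mul_apply]
      calc ∑ i, Eᵀ j i * E i j ≤ ∑ _i : Fin D, ((D:ℝ) * (CI * ε)) * ((D:ℝ) * (CI * (2*B))) := by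
            apply Finset.sum_le_sum
            intro i _
            rw [Matrix.transpose_apply]
            calc E i j * E i j ≤ |E i j * E i j| := le_abs_self _
              _ = |E i j| * |E i j| := abs_mul _ _
              _ ≤ ((D:ℝ) * (CI * ε)) * ((D:ℝ) * (CI * (2*B))) :=
                  mul_le_mul (hE i j) (hE2B i j) (abs_nonneg _) (by positivity)
        _ = (D:ℝ) * (((D:ℝ) * (CI * ε)) * ((D:ℝ) * (CI * (2*B)))) := by
            rw [Finset.sum_const, Finset.card_univ, Fintype.card_fin, nsmul_eq_mul]
    calc ∑ j, (Eᵀ * E).diag j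
        ≤ ∑ _j : Fin D, (D:ℝ) * (((D:ℝ) * (CI * ε)) * ((D:ℝ) * (CI * (2*B)))) :=
          Finset.sum_le_sum (fun j _ => hterm j)
      _ = (D:ℝ) * ((D:ℝ) * (((D:ℝ) * (CI * ε)) * ((D:ℝ) * (CI * (2*B))))) := by
          rw [Finset.sum_const, Finset.card_univ, Fintype.card_fin, nsmul_eq_mul]
      _ = (D:ℝ)^2 * (((D:ℝ) * (CI * ε)) * ((D:ℝ) * (CI * (2*B)))) := by ring
  have hlog : (1/2 : ℝ) * (Real.log (L₁*L₁ᵀ).det - Real.log (L₀*L₀ᵀ).det)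
      ≤ (D:ℝ) * (ε / c₀) := by
    have hd₀ne : ∀ j, L₀ j j ≠ 0 := fun j h => by
      have := hd₀ j; rw [h, abs_zero] at this; linarith
    have hd₁ne : ∀ j, L₁ j j ≠ 0 := fun j h => by
      have := hd₁ j; rw [h, abs_zero] at this; linarith
    rw [log_det_LLT L₁ hT₁ hd₁ne, log_det_LLT L₀ hT₀ hd₀ne]
    have heq : (1/2 : ℝ) * (2 * ∑ j, Real.log |L₁ j j| - 2 * ∑ j, Real.log |L₀ j j|)
        = ∑ j, (Real.log |L₁ j j| - Real.log |L₀ j j|) := by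
      rw [Finset.sum_sub_distrib]
      ring
    rw [heq]
    calc ∑ j, (Real.log |L₁ j j| - Real.log |L₀ j j|) ≤ ∑ _j : Fin D, ε / c₀ := by
          apply Finset.sum_le_sum
          intro j _
          refine le_trans (log_abs_sub_log_abs_le hc₀ (hd₀ j) (hd₁ j)) ?_
          gcongr
          exact hεle j j
      _ = (D:ℝ) * (ε / c₀) := by
          rw [Finset.sum_const, Finset.card_univ, Fintype.card_fin, nsmul_eq_mul]
  rw [hMeq, htr]
  have key : (1/2 : ℝ) * ((D:ℝ) + 2 * Matrix.trace E + Matrix.trace (Eᵀ * E) - (D:ℝ))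
      = Matrix.trace E + (1/2) * Matrix.trace (Eᵀ * E) := by ring
  calc (1/2 : ℝ) * (Real.log (L₁*L₁ᵀ).det - Real.log (L₀*L₀ᵀ).det)
        + (1/2) * ((D:ℝ) + 2 * Matrix.trace E + Matrix.trace (Eᵀ * E) - (D:ℝ))
      ≤ (D:ℝ) * (ε / c₀) + ((D:ℝ) * ((D:ℝ) * (CI * ε))
          + (1/2) * ((D:ℝ)^2 * (((D:ℝ) * (CI * ε)) * ((D:ℝ) * (CI * (2*B)))))) := by
        rw [key]
        have h2 := htrEE
        linarith [htrE, htrEE, hlog]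
    _ = ((D:ℝ)/c₀ + (D:ℝ)^2*CI + (D:ℝ)^4*CI^2*B) * ε := by
        field_simp
        ring
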